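/- Under the hypotheses of the previous relation (d = 2n+3), if Φ_1(√r) is (n+1)-times continuously differentiable on (0,1), then the radial density is recovered as Φ_R(√r) = (2√π / Γ(n+3/2)) r^{n+1} (-1)^{n+1} (d^{n+1}/dr^{n+1}) Φ_1(√r) for r ∈ (0,1). -/

import Mathlib

open MeasureTheory Set

theorem aux_int_sqrt (ΦR : ℝ → ℝ) (hRpos : ∀ r, 0 ≤ ΦR r) (hInt : Integrable ΦR)
    {a : ℝ} (ha : 0 < a) :
    IntegrableOn (fun s => ΦR (Real.sqrt s)) (Ioc a 1) := by
  have hsa : (0:ℝ) < Real.sqrt a := Real.sqrt_pos.2 ha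
  have hsq : Ioc a 1 = (fun t : ℝ => t ^ 2) '' Ioc (Real.sqrt a) 1 := by
    ext s
    constructor
    · rintro ⟨hs1, hs2⟩
      have hs0 : (0:ℝ) ≤ s := le_of_lt (ha.trans hs1)
      refine ⟨Real.sqrt s, ⟨?_, ?_⟩, Real.sq_sqrt hs0⟩
      · have := Real.sqrt_lt_sqrt (le_of_lt ha) hs1
        exact this
      · simpa using Real.sqrt_le_sqrt hs2
    · rintro ⟨t, ⟨ht1, ht2⟩, rfl⟩
      have ht0 : (0:ℝ) < t := hsa.trans ht1
      constructor
      · calc a = Real.sqrt a ^ 2 := (Real.sq_sqrt ha.le).symm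
          _ < t ^ 2 := by nlinarith
      · simp only []
        nlinarith
  rw [hsq]
  rw [integrableOn_image_iff_integrableOn_abs_deriv_smul (f' := fun t => 2 * t)
      measurableSet_Ioc (fun x hx => ((hasDerivAt_pow 2 x).congr_deriv (by ring)).hasDerivWithinAt)
      (fun x hx y hy hxy => by
        have hx0 : (0:ℝ) < x := hsa.trans hx.1
        have hy0 : (0:ℝ) < y := hsa.trans hy.1
        nlinarith [sq_nonneg (x - y), sq_nonneg (x + y)])]
  have hcongr : EqOn (fun t : ℝ => |2 * t| • ΦR (Real.sqrt (t ^ 2)))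
      (fun t : ℝ => |2 * t| * ΦR t) (Ioc (Real.sqrt a) 1) := by
    intro t ht
    have ht0 : (0:ℝ) ≤ t := (hsa.trans ht.1).le
    simp [Real.sqrt_sq ht0, smul_eq_mul]
  refine (IntegrableOn.congr_fun ?_ hcongr.symm measurableSet_Ioc)
  have h2 : Integrable (fun t : ℝ => 2 * ΦR t) := hInt.const_mul 2
  refine Integrable.mono (h2.restrict (s := Ioc (Real.sqrt a) 1)) ?_ ?_
  · exact (continuous_abs.comp (continuous_const.mul continuous_id)).aestronglyMeasurable.mul
      hInt.aestronglyMeasurable.restrict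
  · refine (ae_restrict_iff' measurableSet_Ioc).2 (Filter.Eventually.of_forall ?_)
    intro t ht
    have ht0 : (0:ℝ) ≤ t := (hsa.trans ht.1).le
    have : |2 * t| ≤ 2 := by rw [abs_mul]; simp [abs_of_nonneg ht0]; nlinarith [ht.2]
    simp only [Real.norm_eq_abs]
    rw [abs_mul, abs_abs, abs_of_nonneg (hRpos t), abs_of_nonneg (by have := hRpos t; positivity : (0:ℝ) ≤ 2 * ΦR t)]
    have := hRpos t
    nlinarith [abs_nonneg (2*t)]

theorem aux_int_dom (ΦR : ℝ → ℝ) (hRpos : ∀ r, 0 ≤ ΦR r) (hInt : Integrable ΦR)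
    {a : ℝ} (ha : 0 < a) (ψ : ℝ → ℝ) (hψ : ContinuousOn ψ (Ioo a 1)) (M : ℝ)
    (hbd : ∀ s ∈ Ioc a 1, |ψ s| ≤ M * ΦR (Real.sqrt s)) :
    IntegrableOn ψ (Ioc a 1) := by
  have hrestr : volume.restrict (Ioc a 1) = volume.restrict (Ioo a 1) :=
    (Measure.restrict_congr_set Ioo_ae_eq_Ioc).symm
  have hbdInt : IntegrableOn (fun s => M * ΦR (Real.sqrt s)) (Ioc a 1) :=
    (aux_int_sqrt ΦR hRpos hInt ha).const_mul M
  refine Integrable.mono hbdInt ?_ ?_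
  · show AEStronglyMeasurable ψ (volume.restrict (Ioc a 1))
    rw [hrestr]
    exact hψ.aestronglyMeasurable measurableSet_Ioo
  · refine (ae_restrict_iff' measurableSet_Ioc).2 (Filter.Eventually.of_forall ?_)
    intro s hs
    have h1 := hbd s hs
    simp only [Real.norm_eq_abs]
    exact h1.trans (le_abs_self _)

theorem aux_cont_h (n : ℕ) (ΦR : ℝ → ℝ) (hRcont : ContinuousOn ΦR (Set.Ioo 0 1)) :
    ContinuousOn (fun s : ℝ => (s ^ (n + 1))⁻¹ * ΦR (Real.sqrt s)) (Ioo 0 1) := by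
  apply ContinuousOn.mul
  · exact ContinuousOn.inv₀ (by fun_prop) (fun s hs => pow_ne_zero _ (ne_of_gt hs.1))
  · refine hRcont.comp Real.continuous_sqrt.continuousOn ?_
    intro s hs
    exact ⟨Real.sqrt_pos.2 hs.1, (Real.sqrt_lt' one_pos).2 (by simpa using hs.2)⟩

theorem aux_img (r : ℝ) (hr : 0 < r) :
    (fun u : ℝ => r / u ^ 2) '' Ioc 0 1 = Ici r := by
  ext s
  constructor
  · rintro ⟨u, ⟨hu0, hu1⟩, rfl⟩
    have hu2 : u ^ 2 ≤ 1 := by nlinarith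
    have : r * u ^ 2 ≤ r * 1 := by nlinarith [mul_le_mul_of_nonneg_left hu2 hr.le]
    rw [mem_Ici, le_div_iff₀ (by positivity)]
    nlinarith
  · intro hs
    have hs0 : 0 < s := lt_of_lt_of_le hr hs
    refine ⟨Real.sqrt (r / s), ⟨Real.sqrt_pos.2 (by positivity), ?_⟩, ?_⟩
    · exact Real.sqrt_le_one.2 ((div_le_one hs0).2 hs)
    · show r / Real.sqrt (r / s) ^ 2 = s
      rw [Real.sq_sqrt (by positivity : (0:ℝ) ≤ r / s)]
      field_simp

theorem aux_int_f (n : ℕ) (ΦR : ℝ → ℝ) (hRpos : ∀ r, 0 ≤ ΦR r)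
    (hRcont : ContinuousOn ΦR (Set.Ioo 0 1)) (hInt : Integrable ΦR)
    {r : ℝ} (hr : 0 < r) (hr1 : r < 1) (c : ℝ) (i : ℕ) (hc : 0 ≤ c) (hc1 : c ≤ r) :
    IntegrableOn (fun s => (s - c) ^ i * ((s ^ (n + 1))⁻¹ * ΦR (Real.sqrt s))) (Ioc r 1) := by
  refine aux_int_dom ΦR hRpos hInt hr _ ?_ ((r ^ (n + 1))⁻¹) ?_
  · exact ((continuousOn_id.sub continuousOn_const).pow i).mul
      ((aux_cont_h n ΦR hRcont).mono (Ioo_subset_Ioo hr.le le_rfl))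
  · intro s hs
    have h0s : (0:ℝ) < s := hr.trans hs.1
    have hnn : 0 ≤ (s - c) ^ i * ((s ^ (n + 1))⁻¹ * ΦR (Real.sqrt s)) :=
      mul_nonneg (pow_nonneg (by linarith [hs.1]) i)
        (mul_nonneg (inv_nonneg.2 (by positivity)) (hRpos _))
    rw [abs_of_nonneg hnn]
    have h1 : (s - c) ^ i ≤ 1 := pow_le_one₀ (by linarith [hs.1]) (by linarith [hs.2])
    have h2 : (s ^ (n + 1))⁻¹ ≤ (r ^ (n + 1))⁻¹ := by
      apply inv_anti₀ (by positivity)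
      exact pow_le_pow_left₀ hr.le hs.1.le _
    calc (s - c) ^ i * ((s ^ (n + 1))⁻¹ * ΦR (Real.sqrt s))
        ≤ 1 * ((r ^ (n + 1))⁻¹ * ΦR (Real.sqrt s)) := by
          apply mul_le_mul h1 (mul_le_mul h2 le_rfl (hRpos _) (by positivity))
          · exact mul_nonneg (inv_nonneg.2 (by positivity)) (hRpos _)
          · norm_num
      _ = (r ^ (n + 1))⁻¹ * ΦR (Real.sqrt s) := one_mul _

theorem aux_rel (n : ℕ) (ΦR : ℝ → ℝ) (hRpos : ∀ r, 0 ≤ ΦR r)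
    (hRcont : ContinuousOn ΦR (Set.Ioo 0 1))
    (hRsupp : ∀ r, r ∉ Set.Ioo (0 : ℝ) 1 → ΦR r = 0) (hInt : Integrable ΦR)
    {r : ℝ} (hr : 0 < r) (hr1 : r < 1) :
    (∫ u in Ioc (0:ℝ) 1, (1 - u ^ 2) ^ n * (1 / u) * ΦR (Real.sqrt r / u))
      = (1 / 2) * ∫ s in r..1, (s - r) ^ n * ((s ^ (n + 1))⁻¹ * ΦR (Real.sqrt s)) := by
  set f : ℝ → ℝ := fun s => (s - r) ^ n * ((s ^ (n + 1))⁻¹ * ΦR (Real.sqrt s)) with hf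
  have hd : ∀ u ∈ Ioc (0:ℝ) 1, HasDerivWithinAt (fun u : ℝ => r / u ^ 2)
      (-2 * r / u ^ 3) (Ioc 0 1) u := by
    intro u hu
    have hu0 : u ≠ 0 := ne_of_gt hu.1
    have h1 := ((hasDerivAt_pow 2 u).inv (pow_ne_zero 2 hu0)).const_mul r
    have h2 : HasDerivAt (fun u : ℝ => r / u ^ 2) (r * (-(↑2 * u ^ (2 - 1)) / (u ^ 2) ^ 2)) u := by
      simpa [div_eq_mul_inv] using h1
    have h3 : r * (-(↑2 * u ^ (2 - 1)) / (u ^ 2) ^ 2) = -2 * r / u ^ 3 := by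
      field_simp; ring
    exact (h3 ▸ h2).hasDerivWithinAt
  have hinj : InjOn (fun u : ℝ => r / u ^ 2) (Ioc 0 1) := by
    intro u hu v hv huv
    simp only at huv
    have hu0 : u ≠ 0 := ne_of_gt hu.1
    have hv0 : v ≠ 0 := ne_of_gt hv.1
    have h2 : u ^ 2 = v ^ 2 := by
      have := (div_eq_div_iff (pow_ne_zero 2 hu0) (pow_ne_zero 2 hv0)).1 huv
      have := mul_left_cancel₀ (ne_of_gt hr) this
      linarith
    nlinarith [hu.1, hv.1]
  have hcov := integral_image_eq_integral_abs_deriv_smul measurableSet_Ioc hd hinj f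
  rw [aux_img r hr] at hcov
  have hpt : EqOn (fun u : ℝ => |(-2 * r / u ^ 3)| • f (r / u ^ 2))
      (fun u : ℝ => 2 * ((1 - u ^ 2) ^ n * (1 / u) * ΦR (Real.sqrt r / u))) (Ioc 0 1) := by
    intro u hu
    have hu0 : (0:ℝ) < u := hu.1
    have hsq : Real.sqrt (r / u ^ 2) = Real.sqrt r / u := by
      rw [Real.sqrt_div hr.le, Real.sqrt_sq hu0.le]
    have habs : |(-2 * r / u ^ 3)| = 2 * r / u ^ 3 := by
      rw [abs_of_neg (div_neg_of_neg_of_pos (by nlinarith) (by positivity))]; ring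
    have hfac : r / u ^ 2 - r = (r / u ^ 2) * (1 - u ^ 2) := by field_simp
    simp only [hf, smul_eq_mul, hsq, habs, hfac, mul_pow]
    have hw : r / u ^ 2 ≠ 0 := by positivity
    have hu0' : u ≠ 0 := hu0.ne'
    field_simp
    have h' : u ^ 2 * u⁻¹ ^ 2 = 1 := by field_simp
    linear_combination (norm := ring_nf) (-(r * r ^ n * u⁻¹ ^ (n * 2) * ΦR (u⁻¹ * √r) * (1 - u ^ 2) ^ n)) * h'
  rw [setIntegral_congr_fun measurableSet_Ioc hpt, MeasureTheory.integral_const_mul] at hcov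
  have hsplit : ∫ s in Ici r, f s = ∫ s in Ioc r 1, f s := by
    rw [setIntegral_congr_set (Ioi_ae_eq_Ici).symm, ← Set.Ioc_union_Ioi_eq_Ioi hr1.le]
    have hz : EqOn f (fun _ => (0:ℝ)) (Ioi 1) := by
      intro s hs
      have h1s : (1:ℝ) < s := hs
      have : ΦR (Real.sqrt s) = 0 := by
        apply hRsupp
        intro hmem
        have : (1:ℝ) < Real.sqrt s := (Real.lt_sqrt (by norm_num)).2 (by nlinarith)
        exact absurd hmem.2 (not_lt.2 this.le)
      simp [hf, this]
    rw [setIntegral_union (Set.Ioc_disjoint_Ioi le_rfl) measurableSet_Ioi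
      (aux_int_f n ΦR hRpos hRcont hInt hr hr1 r n hr.le le_rfl)
      ((integrableOn_congr_fun hz measurableSet_Ioi).2 ((integrableOn_const_iff (by simp)).2 (Or.inl (by simp))))]
    rw [setIntegral_congr_fun measurableSet_Ioi hz]
    simp [hf]
  rw [hsplit] at hcov
  have hiv : ∫ s in r..1, f s = ∫ s in Ioc r 1, f s := intervalIntegral.integral_of_le hr1.le
  rw [hiv, hcov]; ring

theorem aux_A_deriv (n i : ℕ) (ΦR : ℝ → ℝ) (hRpos : ∀ r, 0 ≤ ΦR r)
    (hRcont : ContinuousOn ΦR (Set.Ioo 0 1)) (hInt : Integrable ΦR)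
    {r : ℝ} (hr : 0 < r) (hr1 : r < 1) :
    HasDerivAt (fun x => ∫ s in x..1, s ^ i * ((s ^ (n + 1))⁻¹ * ΦR (Real.sqrt s)))
      (-(r ^ i * ((r ^ (n + 1))⁻¹ * ΦR (Real.sqrt r)))) r := by
  have hmem : r ∈ Ioo (0:ℝ) 1 := ⟨hr, hr1⟩
  have hcont : ContinuousOn (fun s : ℝ => s ^ i * ((s ^ (n + 1))⁻¹ * ΦR (Real.sqrt s)))
      (Ioo 0 1) := (continuousOn_pow i).mul (aux_cont_h n ΦR hRcont)
  refine intervalIntegral.integral_hasDerivAt_left ?_ ?_ ?_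
  · rw [intervalIntegrable_iff_integrableOn_Ioc_of_le hr1.le]
    have := aux_int_f n ΦR hRpos hRcont hInt hr hr1 0 i le_rfl hr.le
    simpa using this
  · exact ⟨Ioo 0 1, isOpen_Ioo.mem_nhds hmem, hcont.aestronglyMeasurable measurableSet_Ioo⟩
  · exact hcont.continuousAt (isOpen_Ioo.mem_nhds hmem)

theorem aux_J0_deriv (n : ℕ) (ΦR : ℝ → ℝ) (hRpos : ∀ r, 0 ≤ ΦR r)
    (hRcont : ContinuousOn ΦR (Set.Ioo 0 1)) (hInt : Integrable ΦR)
    {r : ℝ} (hr : 0 < r) (hr1 : r < 1) :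
    HasDerivAt (fun x => ∫ s in x..1, (s - x) ^ 0 * ((s ^ (n + 1))⁻¹ * ΦR (Real.sqrt s)))
      (-((r ^ (n + 1))⁻¹ * ΦR (Real.sqrt r))) r := by
  have heq : (fun x : ℝ => ∫ s in x..1, (s - x) ^ 0 * ((s ^ (n + 1))⁻¹ * ΦR (Real.sqrt s)))
      = fun x : ℝ => ∫ s in x..1, s ^ 0 * ((s ^ (n + 1))⁻¹ * ΦR (Real.sqrt s)) := by
    funext x
    apply intervalIntegral.integral_congr
    intro s _
    simp
  rw [heq]
  simpa using aux_A_deriv n 0 ΦR hRpos hRcont hInt hr hr1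

theorem aux_nat_id (k i : ℕ) (hik : i < k) :
    k.choose i * (k - i) = k * (k - 1).choose i := by
  have hk : 0 < k := Nat.lt_of_le_of_lt (Nat.zero_le i) hik
  have h1 : k.choose (i + 1) * (i + 1) = k.choose i * (k - i) := Nat.choose_succ_right_eq k i
  have h2 : (k - 1).succ * (k - 1).choose i = (k - 1).succ.choose (i + 1) * (i + 1) :=
    Nat.add_one_mul_choose_eq (k - 1) i
  have hk1 : (k-1).succ = k := Nat.succ_pred_eq_of_pos hk
  rw [hk1] at h2
  omega

theorem aux_exp (n k : ℕ) (ΦR : ℝ → ℝ) (hRpos : ∀ r, 0 ≤ ΦR r)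
    (hRcont : ContinuousOn ΦR (Set.Ioo 0 1)) (hInt : Integrable ΦR)
    {r : ℝ} (hr : 0 < r) (hr1 : r < 1) :
    (∫ s in r..1, (s - r) ^ k * ((s ^ (n + 1))⁻¹ * ΦR (Real.sqrt s)))
      = ∑ i ∈ Finset.range (k + 1), ((k.choose i : ℝ) * (-r) ^ (k - i)) *
          ∫ s in r..1, s ^ i * ((s ^ (n + 1))⁻¹ * ΦR (Real.sqrt s)) := by
  have hii : ∀ i : ℕ, IntervalIntegrable
      (fun s => ((k.choose i : ℝ) * (-r) ^ (k - i)) * (s ^ i * ((s ^ (n + 1))⁻¹ * ΦR (Real.sqrt s))))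
      volume r 1 := by
    intro i
    apply IntervalIntegrable.const_mul
    rw [intervalIntegrable_iff_integrableOn_Ioc_of_le hr1.le]
    simpa using aux_int_f n ΦR hRpos hRcont hInt hr hr1 0 i le_rfl hr.le
  have h1 : (∫ s in r..1, (s - r) ^ k * ((s ^ (n + 1))⁻¹ * ΦR (Real.sqrt s)))
      = ∫ s in r..1, ∑ i ∈ Finset.range (k + 1),
          ((k.choose i : ℝ) * (-r) ^ (k - i)) * (s ^ i * ((s ^ (n + 1))⁻¹ * ΦR (Real.sqrt s))) := by
    apply intervalIntegral.integral_congr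
    intro s _
    simp only
    rw [sub_eq_add_neg, add_pow, Finset.sum_mul]
    apply Finset.sum_congr rfl
    intro i _
    ring
  rw [h1, intervalIntegral.integral_finset_sum (fun i _ => hii i)]
  apply Finset.sum_congr rfl
  intro i _
  rw [intervalIntegral.integral_const_mul]

theorem aux_Jk_deriv (n k : ℕ) (hk : 1 ≤ k) (ΦR : ℝ → ℝ) (hRpos : ∀ r, 0 ≤ ΦR r)
    (hRcont : ContinuousOn ΦR (Set.Ioo 0 1)) (hInt : Integrable ΦR)
    {r : ℝ} (hr : 0 < r) (hr1 : r < 1) :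
    HasDerivAt (fun x => ∫ s in x..1, (s - x) ^ k * ((s ^ (n + 1))⁻¹ * ΦR (Real.sqrt s)))
      (-(k : ℝ) * ∫ s in r..1, (s - r) ^ (k - 1) * ((s ^ (n + 1))⁻¹ * ΦR (Real.sqrt s))) r := by
  set A : ℕ → ℝ → ℝ := fun i x => ∫ s in x..1, s ^ i * ((s ^ (n + 1))⁻¹ * ΦR (Real.sqrt s))
    with hA
  set hval : ℝ := (r ^ (n + 1))⁻¹ * ΦR (Real.sqrt r) with hhval
  have hW : HasDerivAt (fun x => ∑ i ∈ Finset.range (k + 1),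
      ((k.choose i : ℝ) * (-x) ^ (k - i)) * A i x)
      (∑ i ∈ Finset.range (k + 1),
        ((k.choose i : ℝ) * (((k - i : ℕ) : ℝ) * (-r) ^ (k - i - 1) * (-1)) * A i r +
          ((k.choose i : ℝ) * (-r) ^ (k - i)) * (-(r ^ i * hval)))) r := by
    apply HasDerivAt.fun_sum
    intro i _
    have h1 : HasDerivAt (fun x : ℝ => (k.choose i : ℝ) * (-x) ^ (k - i))
        ((k.choose i : ℝ) * (((k - i : ℕ) : ℝ) * (-r) ^ (k - i - 1) * (-1))) r := by
      have hb : HasDerivAt (fun x : ℝ => (-x) ^ (k - i))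
          ((((k - i : ℕ) : ℝ) * (-r) ^ (k - i - 1)) * (-1)) r :=
        (hasDerivAt_pow (k - i) (-r)).comp r (hasDerivAt_neg r)
      simpa [mul_assoc] using hb.const_mul ((k.choose i : ℝ))
    have h2 : HasDerivAt (A i) (-(r ^ i * hval)) r := by
      rw [hA, hhval]
      simpa [mul_assoc] using aux_A_deriv n i ΦR hRpos hRcont hInt hr hr1
    exact h1.mul h2
  have hJW : (fun x => ∫ s in x..1, (s - x) ^ k * ((s ^ (n + 1))⁻¹ * ΦR (Real.sqrt s)))
      =ᶠ[nhds r] (fun x => ∑ i ∈ Finset.range (k + 1),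
        ((k.choose i : ℝ) * (-x) ^ (k - i)) * A i x) := by
    filter_upwards [isOpen_Ioo.mem_nhds (show r ∈ Ioo (0:ℝ) 1 from ⟨hr, hr1⟩)] with x hx
    exact aux_exp n k ΦR hRpos hRcont hInt hx.1 hx.2
  have hD : (∑ i ∈ Finset.range (k + 1),
        ((k.choose i : ℝ) * (((k - i : ℕ) : ℝ) * (-r) ^ (k - i - 1) * (-1)) * A i r +
          ((k.choose i : ℝ) * (-r) ^ (k - i)) * (-(r ^ i * hval))))
      = -(k : ℝ) * ∫ s in r..1, (s - r) ^ (k - 1) * ((s ^ (n + 1))⁻¹ * ΦR (Real.sqrt s)) := by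
    rw [aux_exp n (k - 1) ΦR hRpos hRcont hInt hr hr1]
    rw [Finset.sum_add_distrib]
    have hs2 : (∑ i ∈ Finset.range (k + 1),
        ((k.choose i : ℝ) * (-r) ^ (k - i)) * (-(r ^ i * hval))) = 0 := by
      have heq : (∑ i ∈ Finset.range (k + 1),
          ((k.choose i : ℝ) * (-r) ^ (k - i)) * (-(r ^ i * hval)))
          = (-hval) * ∑ i ∈ Finset.range (k + 1), r ^ i * (-r) ^ (k - i) * (k.choose i : ℝ) := by
        rw [Finset.mul_sum]
        exact Finset.sum_congr rfl fun i _ => by ring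
      rw [heq, ← add_pow]
      simp [zero_pow (show k ≠ 0 by omega)]
    rw [hs2, add_zero]
    rw [Finset.sum_range_succ]
    simp only [Nat.sub_self, Nat.cast_zero, zero_mul, mul_zero, zero_mul, add_zero]
    have hkk : k - 1 + 1 = k := by omega
    rw [hkk, Finset.mul_sum]
    apply Finset.sum_congr rfl
    intro i hi
    have hik : i < k := Finset.mem_range.mp hi
    have hcast : (k.choose i : ℝ) * ((k - i : ℕ) : ℝ) = (k : ℝ) * (((k - 1).choose i : ℝ)) := by
      rw [← Nat.cast_mul, ← Nat.cast_mul, aux_nat_id k i hik]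
    have hexp2 : k - i - 1 = k - 1 - i := by omega
    rw [hexp2]
    linear_combination (-((-r) ^ (k - 1 - i) * A i r)) * hcast
  exact hD ▸ (hW.congr_of_eventuallyEq hJW)

theorem radial_density_from_first_coord_odd (n : ℕ) (ΦR Φ1 : ℝ → ℝ)
    (hRpos : ∀ r, 0 ≤ ΦR r) (hRcont : ContinuousOn ΦR (Set.Ioo 0 1))
    (hRsupp : ∀ r, r ∉ Set.Ioo (0 : ℝ) 1 → ΦR r = 0)
    (hRnorm : ∫ r, ΦR r = 1)
    (hrel : ∀ x : ℝ, 0 < x →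
      Φ1 x = (Real.Gamma ((n : ℝ) + 3 / 2) /
          (Real.sqrt Real.pi * Real.Gamma ((n : ℝ) + 1))) *
        ∫ u in Set.Ioc (0 : ℝ) 1, (1 - u ^ 2) ^ n * (1 / u) * ΦR (x / u))
    (hsmooth : ContDiffOn ℝ (n + 1 : ℕ)
      (fun r => Φ1 (Real.sqrt r)) (Set.Ioo 0 1)) :
    ∀ r ∈ Set.Ioo (0 : ℝ) 1,
      ΦR (Real.sqrt r) =
        (2 * Real.sqrt Real.pi / Real.Gamma ((n : ℝ) + 3 / 2)) * r ^ (n + 1) *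
          (-1 : ℝ) ^ (n + 1) *
          iteratedDerivWithin (n + 1) (fun r => Φ1 (Real.sqrt r))
            (Set.Ioo 0 1) r := by
  intro r hrmem
  obtain ⟨hr, hr1⟩ := hrmem
  have hInt : Integrable ΦR := by
    by_contra hcon
    rw [integral_undef hcon] at hRnorm
    exact one_ne_zero hRnorm.symm
  set C : ℝ := (Real.Gamma ((n : ℝ) + 3 / 2) /
      (Real.sqrt Real.pi * Real.Gamma ((n : ℝ) + 1))) * (1 / 2) with hC
  have hg : ∀ x ∈ Ioo (0:ℝ) 1, Φ1 (Real.sqrt x)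
      = C * ((-1:ℝ) ^ 0 * (((n.descFactorial 0 : ℕ) : ℝ) *
          ∫ s in x..1, (s - x) ^ (n - 0) * ((s ^ (n + 1))⁻¹ * ΦR (Real.sqrt s)))) := by
    intro x hx
    rw [hrel (Real.sqrt x) (Real.sqrt_pos.2 hx.1),
      aux_rel n ΦR hRpos hRcont hRsupp hInt hx.1 hx.2]
    simp only [Nat.descFactorial_zero, Nat.cast_one, pow_zero, one_mul, Nat.sub_zero]
    ring
  have hUD : UniqueDiffOn ℝ (Ioo (0:ℝ) 1) := isOpen_Ioo.uniqueDiffOn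
  have key : ∀ m, m ≤ n → ∀ x ∈ Ioo (0:ℝ) 1,
      iteratedDerivWithin m (fun r => Φ1 (Real.sqrt r)) (Ioo 0 1) x
        = C * ((-1:ℝ) ^ m * (((n.descFactorial m : ℕ) : ℝ) *
            ∫ s in x..1, (s - x) ^ (n - m) * ((s ^ (n + 1))⁻¹ * ΦR (Real.sqrt s)))) := by
    intro m
    induction m with
    | zero =>
      intro _ x hx
      rw [iteratedDerivWithin_zero]
      exact hg x hx
    | succ m ih =>
      intro hm x hx
      have hm' : m ≤ n := by omega
      rw [iteratedDerivWithin_succ]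
      have hEq : EqOn (iteratedDerivWithin m (fun r => Φ1 (Real.sqrt r)) (Ioo 0 1))
          (fun y => C * ((-1:ℝ) ^ m * (((n.descFactorial m : ℕ) : ℝ) *
            ∫ s in y..1, (s - y) ^ (n - m) * ((s ^ (n + 1))⁻¹ * ΦR (Real.sqrt s)))))
          (Ioo 0 1) := fun y hy => ih hm' y hy
      rw [derivWithin_congr hEq (hEq hx), derivWithin_of_isOpen isOpen_Ioo hx]
      have hder := ((aux_Jk_deriv n (n - m) (by omega) ΦR hRpos hRcont hInt
        hx.1 hx.2).const_mul (C * ((-1:ℝ) ^ m * ((n.descFactorial m : ℕ) : ℝ))))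
      have hfun : (fun y => (C * ((-1:ℝ) ^ m * ((n.descFactorial m : ℕ) : ℝ))) *
          ∫ s in y..1, (s - y) ^ (n - m) * ((s ^ (n + 1))⁻¹ * ΦR (Real.sqrt s)))
          = (fun y => C * ((-1:ℝ) ^ m * (((n.descFactorial m : ℕ) : ℝ) *
            ∫ s in y..1, (s - y) ^ (n - m) * ((s ^ (n + 1))⁻¹ * ΦR (Real.sqrt s))))) := by
        funext y; ring
      rw [hfun] at hder
      rw [hder.deriv]
      have he1 : n - m - 1 = n - (m + 1) := by omega
      have he2 : ((n.descFactorial (m + 1) : ℕ) : ℝ)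
          = ((n - m : ℕ) : ℝ) * ((n.descFactorial m : ℕ) : ℝ) := by
        rw [← Nat.cast_mul, Nat.descFactorial_succ]
      rw [he1, he2, pow_succ]
      ring
  have hfin : iteratedDerivWithin (n + 1) (fun r => Φ1 (Real.sqrt r)) (Ioo 0 1) r
      = C * ((-1:ℝ) ^ n * (((Nat.factorial n : ℕ) : ℝ) * (-((r ^ (n + 1))⁻¹ * ΦR (Real.sqrt r))))) := by
    rw [iteratedDerivWithin_succ]
    have hEq : EqOn (iteratedDerivWithin n (fun r => Φ1 (Real.sqrt r)) (Ioo 0 1))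
        (fun y => C * ((-1:ℝ) ^ n * (((n.descFactorial n : ℕ) : ℝ) *
          ∫ s in y..1, (s - y) ^ (n - n) * ((s ^ (n + 1))⁻¹ * ΦR (Real.sqrt s)))))
        (Ioo 0 1) := fun y hy => key n le_rfl y hy
    rw [derivWithin_congr hEq (hEq ⟨hr, hr1⟩), derivWithin_of_isOpen isOpen_Ioo ⟨hr, hr1⟩]
    have hder := ((aux_J0_deriv n ΦR hRpos hRcont hInt hr hr1).const_mul
      (C * ((-1:ℝ) ^ n * ((n.descFactorial n : ℕ) : ℝ))))
    have hfun : (fun y => (C * ((-1:ℝ) ^ n * ((n.descFactorial n : ℕ) : ℝ))) *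
        ∫ s in y..1, (s - y) ^ 0 * ((s ^ (n + 1))⁻¹ * ΦR (Real.sqrt s)))
        = (fun y => C * ((-1:ℝ) ^ n * (((n.descFactorial n : ℕ) : ℝ) *
          ∫ s in y..1, (s - y) ^ (n - n) * ((s ^ (n + 1))⁻¹ * ΦR (Real.sqrt s))))) := by
      funext y
      rw [Nat.sub_self]
      ring
    rw [hfun] at hder
    rw [hder.deriv, Nat.descFactorial_self]
    ring
  rw [hfin]
  have hG : 0 < Real.Gamma ((n : ℝ) + 3 / 2) := Real.Gamma_pos_of_pos (by positivity)
  have hS : 0 < Real.sqrt Real.pi := Real.sqrt_pos.2 Real.pi_pos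
  have hP : 0 < r ^ (n + 1) := by positivity
  have hfact : (0:ℝ) < ((Nat.factorial n : ℕ) : ℝ) := by exact_mod_cast Nat.factorial_pos n
  rw [hC, Real.Gamma_nat_eq_factorial]
  have hsign : ((-1:ℝ)) ^ (n + 1) * ((-1:ℝ)) ^ n * (-1) = 1 := by
    have h1 : ((-1:ℝ)) ^ (n + 1) * ((-1:ℝ)) ^ n * (-1)
        = ((-1:ℝ)) ^ (n + 1) * ((-1:ℝ)) ^ (n + 1) := by ring
    rw [h1, ← pow_add]
    exact Even.neg_one_pow ⟨n + 1, by ring⟩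
  have hsq : ((-1:ℝ)) ^ (n * 2) = 1 := by
    rw [mul_comm n 2, pow_mul]
    norm_num
  field_simp
  ring_nf
  rw [hsq]
  ring
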